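/- For n ≥ 3 with n ≡ 0 (mod 4), the cycle C_n has a color-blind distinguishing 2-edge-coloring. -/

import Mathlib

open Finset

/-- The color-blind partition of `v`: the multiset of (nonzero) counts of incident
edges of each color, i.e. the partition of `deg v` with trailing zeroes removed. -/
def cbp {V : Type*} [Fintype V] [DecidableEq V] (G : SimpleGraph V) [DecidableRel G.Adj]
    {k : ℕ} (c : Sym2 V → Fin k) (v : V) : Multiset ℕ :=
  (((Finset.univ : Finset (Fin k)).val.map fun i =>
    ((G.neighborFinset v).filter fun w => c s(v, w) = i).card).filter fun m => m ≠ 0)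

/-- `c` is a color-blind distinguishing edge-coloring of `G`. -/
def IsCBD {V : Type*} [Fintype V] [DecidableEq V] (G : SimpleGraph V) [DecidableRel G.Adj]
    {k : ℕ} (c : Sym2 V → Fin k) : Prop :=
  ∀ u v : V, G.Adj u v → cbp G c u ≠ cbp G c v

/-- The cycle `C_n` on vertex set `Fin n` (for `n ≥ 3`). -/
def cycleGraph (n : ℕ) : SimpleGraph (Fin n) where
  Adj p q := p ≠ q ∧ ((p.val + 1) % n = q.val ∨ (q.val + 1) % n = p.val)
  symm := ⟨fun p q h => ⟨h.1.symm, h.2.symm⟩⟩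
  loopless := ⟨fun p h => h.1 rfl⟩

instance (n : ℕ) : DecidableRel (cycleGraph n).Adj := fun p q =>
  inferInstanceAs (Decidable (p ≠ q ∧ ((p.val + 1) % n = q.val ∨ (q.val + 1) % n = p.val)))

/-! ### Auxiliary lemmas -/

lemma mod_succ_aux (n a : ℕ) (h : a < n) :
    (a + 1) % n = if a + 1 = n then 0 else a + 1 := by
  split
  · simp [*]
  · exact Nat.mod_eq_of_lt (by omega)

lemma mod_pred_aux (n a : ℕ) (h3 : 3 ≤ n) (h : a < n) :
    (n - 1 + a) % n = if a = 0 then n - 1 else a - 1 := by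
  split
  · subst ‹a = 0›; exact Nat.mod_eq_of_lt (by omega)
  · have : n - 1 + a = n + (a - 1) := by omega
    rw [this, Nat.add_mod_left]
    exact Nat.mod_eq_of_lt (by omega)

lemma cbp_pair {V : Type*} [Fintype V] [DecidableEq V] (G : SimpleGraph V)
    [DecidableRel G.Adj] (c : Sym2 V → Fin 2) (v x y : V) (hxy : x ≠ y)
    (hN : G.neighborFinset v = {x, y}) :
    cbp G c v = if c s(v, x) = c s(v, y) then {2} else {1, 1} := by
  classical
  unfold cbp
  rw [hN]
  have huniv : (Finset.univ : Finset (Fin 2)).val = {0, 1} := by decide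
  rw [huniv]
  have hfilter : ∀ i : Fin 2, (({x, y} : Finset V).filter fun w => c s(v, w) = i).card
      = (if c s(v, x) = i then 1 else 0) + (if c s(v, y) = i then 1 else 0) := by
    intro i
    rw [Finset.filter_insert, Finset.filter_singleton]
    split <;> split <;>
      simp [Finset.card_insert_of_notMem, Finset.mem_singleton, hxy]
  simp only [Multiset.map_cons, Multiset.map_singleton, hfilter]
  have ha : c s(v, x) = 0 ∨ c s(v, x) = 1 := by omega
  have hb : c s(v, y) = 0 ∨ c s(v, y) = 1 := by omega
  rcases ha with ha | ha <;> rcases hb with hb | hb <;> rw [ha, hb] <;> decide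

theorem cycle_four_dvd_dal_le_two (n : ℕ) (h3 : 3 ≤ n) (h4 : n % 4 = 0) :
    ∃ c : Sym2 (Fin n) → Fin 2, IsCBD (cycleGraph n) c := by
  haveI : NeZero n := ⟨by omega⟩
  -- the color of the edge with smaller endpoint index `i` is `(i / 2) % 2`
  set h : ℕ → Fin 2 := fun i => ⟨i / 2 % 2, Nat.mod_lt _ two_pos⟩ with hh
  set g : Fin n → Fin n → Fin 2 := fun u v =>
    if (u.val + 1) % n = v.val then h u.val
    else if (v.val + 1) % n = u.val then h v.val else 0 with hg
  have gsymm : ∀ u v : Fin n, g u v = g v u := by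
    intro u v
    simp only [hg]
    by_cases h1 : (u.val + 1) % n = v.val <;> by_cases h2 : (v.val + 1) % n = u.val
    · -- both conditions hold: impossible for n ≥ 3
      exfalso
      have hu := u.isLt
      have hv := v.isLt
      rw [mod_succ_aux n u.val hu] at h1
      rw [mod_succ_aux n v.val hv] at h2
      split_ifs at h1 h2 <;> omega
    · rw [if_pos h1, if_neg h2, if_pos h1]
    · rw [if_neg h1, if_pos h2, if_pos h2]
    · rw [if_neg h1, if_neg h2, if_neg h2, if_neg h1]
  set c : Sym2 (Fin n) → Fin 2 := Sym2.lift ⟨g, gsymm⟩ with hc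
  refine ⟨c, ?_⟩
  have val_one : (1 : Fin n).val = 1 := by
    rw [Fin.val_one']; exact Nat.mod_eq_of_lt (by omega)
  have val_add_one : ∀ v : Fin n, (v + 1).val = (v.val + 1) % n := by
    intro v; rw [Fin.add_def, val_one]
  have val_sub_one : ∀ v : Fin n, (v - 1).val = (n - 1 + v.val) % n := by
    intro v; rw [Fin.sub_def, val_one]
  -- neighbors of v are v+1 and v-1
  have hA : ∀ v w : Fin n, (v.val + 1) % n = w.val ↔ w = v + 1 := by
    intro v w
    rw [Fin.ext_iff, val_add_one]
    exact eq_comm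
  have hB : ∀ v w : Fin n, (w.val + 1) % n = v.val ↔ w = v - 1 := by
    intro v w
    rw [eq_sub_iff_add_eq, Fin.ext_iff, val_add_one]
  have hne1 : ∀ v : Fin n, v + 1 ≠ v := by
    intro v hcon
    have : (1 : Fin n) = 0 := by
      have := congrArg (· - v) hcon
      simpa [add_comm] using this
    rw [Fin.ext_iff, val_one] at this
    simp at this
  have hne2 : ∀ v : Fin n, v - 1 ≠ v := by
    intro v hcon
    have : (1 : Fin n) = 0 := by
      have := congrArg (fun x => v - x) hcon
      simpa [sub_sub_cancel] using this
    rw [Fin.ext_iff, val_one] at this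
    simp at this
  have hxy : ∀ v : Fin n, (v + 1 : Fin n) ≠ v - 1 := by
    intro v hcon
    rw [Fin.ext_iff, val_add_one, val_sub_one] at hcon
    rw [mod_succ_aux n v.val v.isLt, mod_pred_aux n v.val h3 v.isLt] at hcon
    split_ifs at hcon <;> omega
  have hN : ∀ v : Fin n, (cycleGraph n).neighborFinset v = {v + 1, v - 1} := by
    intro v
    ext w
    simp only [SimpleGraph.mem_neighborFinset, Finset.mem_insert, Finset.mem_singleton]
    constructor
    · rintro ⟨hne, hor | hor⟩
      · left; exact (hA v w).1 hor
      · right; exact (hB v w).1 hor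
    · rintro (rfl | rfl)
      · exact ⟨(hne1 v).symm, Or.inl ((hA v _).2 rfl)⟩
      · exact ⟨(hne2 v).symm, Or.inr ((hB v _).2 rfl)⟩
  -- the colors of the two edges at v
  have hc1 : ∀ v : Fin n, c s(v, v + 1) = h v.val := by
    intro v
    show g v (v + 1) = h v.val
    rw [hg]
    simp only [(hA v (v + 1)).2 rfl, if_true, ite_true, if_pos]
  have hc2 : ∀ v : Fin n, c s(v, v - 1) = h ((n - 1 + v.val) % n) := by
    intro v
    show g v (v - 1) = h ((n - 1 + v.val) % n)
    simp only [hg]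
    have hfirst : ¬((v.val + 1) % n = (v - 1).val) := by
      rw [hA]
      intro hcon
      exact hxy v hcon.symm
    rw [if_neg hfirst, if_pos (by rw [hB]), val_sub_one]
  -- the cbp of each vertex depends only on parity
  have hcbp : ∀ v : Fin n, cbp (cycleGraph n) c v
      = if v.val % 2 = 1 then ({2} : Multiset ℕ) else {1, 1} := by
    intro v
    rw [cbp_pair (cycleGraph n) c v (v + 1) (v - 1) (hxy v) (hN v), hc1, hc2]
    have : (h v.val = h ((n - 1 + v.val) % n)) ↔ v.val % 2 = 1 := by
      rw [hh]
      simp only [Fin.mk.injEq]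
      rw [mod_pred_aux n v.val h3 v.isLt]
      have hv := v.isLt
      split_ifs with hv0
      · constructor <;> intro hcon <;> omega
      · constructor <;> intro hcon <;> omega
    split_ifs with hh1 hh2 hh2
    · rfl
    · exact absurd (this.1 hh1) hh2
    · exact absurd (this.2 hh2) hh1
    · rfl
  -- conclude
  intro u v hadj
  obtain ⟨hne, hor⟩ := hadj
  have hu := u.isLt
  have hv := v.isLt
  have hpar : u.val % 2 ≠ v.val % 2 := by
    rcases hor with hor | hor
    · rw [mod_succ_aux n u.val hu] at hor
      split_ifs at hor <;> omega
    · rw [mod_succ_aux n v.val hv] at hor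
      split_ifs at hor <;> omega
  rw [hcbp u, hcbp v]
  split_ifs with p1 p2 p2
  · omega
  · decide
  · decide
  · omega
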